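/- Let α, β ∈ ℝ with 0 ≤ −α < β. Then there exists ℓ < −5/4 such that every solution λ of the reduced eigenvalue equation α + β·√(1 + λ + ℓ) = R(λ) satisfies Re λ < −ℓ. -/

import Mathlib

open MeasureTheory

/-- The discrete (pole) part of the reduced Evans-function expression. -/
noncomputable def Rd (z : ℂ) : ℂ :=
  (6075 * (Real.pi : ℂ) ^ 2 / 8192) * (z - 5 / 4)⁻¹
    - (81 * (Real.pi : ℂ) ^ 2 / 8192) * (z + 3 / 4)⁻¹

/-- The continuous-spectrum part of the reduced Evans-function expression. -/
noncomputable def Rc (z : ℂ) : ℂ :=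
  ∫ κ in Set.Ioi (1 : ℝ),
    (((9 * Real.pi ^ 2 / 16) * κ ^ 4 * (1 + κ ^ 2) ^ 2 /
        ((κ ^ 2 + 9 / 4) * (κ ^ 2 + 1 / 4)) *
        (1 / Real.sinh (Real.pi * κ)) ^ 2 : ℝ) : ℂ) * (z + (κ : ℂ) ^ 2 + 1)⁻¹

/-- The full function `R = R_d + R_c`. -/
noncomputable def R (z : ℂ) : ℂ := Rd z + Rc z

/-- The domain `D = ℂ \ ({5/4, -3/4} ∪ (-∞, -2])`. -/
def Dom : Set ℂ :=
  {z | z ≠ 5 / 4 ∧ z ≠ -3 / 4 ∧ ¬(z.im = 0 ∧ z.re ≤ -2)}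

/-- `z` is a solution of the reduced eigenvalue equation
`α + β √(1 + z + ℓ) = R z`, with `z ∈ D` and `1 + z + ℓ ∉ (-∞, 0]`,
where the square root is the principal complex square root. -/
noncomputable def IsSolution (α β ℓ : ℝ) (z : ℂ) : Prop :=
  z ∈ Dom ∧ ¬((1 + z + (ℓ : ℂ)).im = 0 ∧ (1 + z + (ℓ : ℂ)).re ≤ 0) ∧
    (α : ℂ) + (β : ℂ) * (1 + z + (ℓ : ℂ)) ^ ((1 : ℂ) / 2) = R z

lemma re_cpow_half {w : ℂ} (hw : 1 ≤ w.re) : 1 ≤ (w ^ ((1 : ℂ)/2)).re := by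
  have hw0 : w ≠ 0 := by
    intro h; rw [h] at hw; simp at hw; linarith
  set s := w ^ ((1 : ℂ)/2) with hs
  have hs2 : s ^ 2 = w := by
    have h := Complex.cpow_nat_inv_pow w (n := 2) two_ne_zero
    simpa [hs, one_div, show ((2 : ℕ) : ℂ) = 2 by norm_num] using h
  have hsre : 0 ≤ s.re := by
    rw [hs, Complex.cpow_def_of_ne_zero hw0, Complex.exp_re]
    have h1 : (Complex.log w * (1/2)).im = w.arg / 2 := by
      simp [Complex.mul_im, Complex.log_im]; ring
    rw [h1]
    have ha1 := Complex.neg_pi_lt_arg w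
    have ha2 := Complex.arg_le_pi w
    have : 0 ≤ Real.cos (w.arg / 2) := by
      apply Real.cos_nonneg_of_mem_Icc
      constructor <;> [linarith; linarith]
    positivity
  have him : s.re ^ 2 - s.im ^ 2 = w.re := by
    have := congrArg Complex.re hs2
    simpa [pow_two, Complex.mul_re] using this
  nlinarith

lemma weight_le {κ : ℝ} (hκ : 1 ≤ κ) :
    (9 * Real.pi ^ 2 / 16) * κ ^ 4 * (1 + κ ^ 2) ^ 2 /
        ((κ ^ 2 + 9 / 4) * (κ ^ 2 + 1 / 4)) *
        (1 / Real.sinh (Real.pi * κ)) ^ 2 ≤ 92160 * Real.exp (-κ) := by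
  have hπ : 3 < Real.pi := Real.pi_gt_three
  have hπ2 : Real.pi ^ 2 ≤ 10 := by nlinarith [Real.pi_lt_d2]
  set E := Real.exp (Real.pi * κ) with hE
  have hE1 : Real.pi * κ + 1 ≤ E := Real.add_one_le_exp _
  have hE4 : 4 ≤ E := by nlinarith
  have hneg : Real.exp (-(Real.pi * κ)) ≤ 1 := Real.exp_le_one_iff.2 (by nlinarith)
  have hsinh : E / 4 ≤ Real.sinh (Real.pi * κ) := by
    rw [Real.sinh_eq, hE]; rw [Real.exp_neg] at hneg ⊢
    have : (Real.exp (Real.pi * κ))⁻¹ ≤ 1 := hneg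
    linarith
  have hs0 : 0 < Real.sinh (Real.pi * κ) := by linarith
  have hcsch : (1 / Real.sinh (Real.pi * κ)) ^ 2 ≤ 16 / E ^ 2 := by
    rw [div_pow, one_pow, div_le_div_iff₀ (by positivity) (by positivity)]
    nlinarith
  have hk4 : κ ^ 4 ≤ 256 * E := by
    have h1 : κ / 4 + 1 ≤ Real.exp (κ / 4) := Real.add_one_le_exp _
    have h2 : Real.exp (κ / 4) ^ 4 = Real.exp κ := by
      rw [← Real.exp_nat_mul]; congr 1; push_cast; ring
    have h3 : Real.exp κ ≤ E := Real.exp_le_exp.2 (by nlinarith)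
    have h4 : κ ^ 4 ≤ (4 * Real.exp (κ / 4)) ^ 4 := by
      apply pow_le_pow_left₀ (by linarith) (by linarith)
    calc κ ^ 4 ≤ (4 * Real.exp (κ/4)) ^ 4 := h4
      _ = 256 * Real.exp κ := by rw [mul_pow, ← h2]; norm_num
      _ ≤ 256 * E := by linarith
  have hE0 : (0:ℝ) < E := by linarith
  have hD : (0:ℝ) < (κ ^ 2 + 9 / 4) * (κ ^ 2 + 1 / 4) := by positivity
  have hfrac : (9 * Real.pi ^ 2 / 16) * κ ^ 4 * (1 + κ ^ 2) ^ 2 /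
        ((κ ^ 2 + 9 / 4) * (κ ^ 2 + 1 / 4)) ≤ (9 * Real.pi ^ 2 / 4) * κ ^ 4 := by
    rw [div_le_iff₀ hD]
    have key : (1 + κ ^ 2) ^ 2 ≤ 4 * ((κ ^ 2 + 9 / 4) * (κ ^ 2 + 1 / 4)) := by
      nlinarith [sq_nonneg κ, sq_nonneg (κ ^ 2)]
    have h0 : (0:ℝ) ≤ 9 * Real.pi ^ 2 / 16 * κ ^ 4 := by positivity
    nlinarith [mul_le_mul_of_nonneg_left key h0]
  have hmain : (9 * Real.pi ^ 2 / 16) * κ ^ 4 * (1 + κ ^ 2) ^ 2 /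
        ((κ ^ 2 + 9 / 4) * (κ ^ 2 + 1 / 4)) *
        (1 / Real.sinh (Real.pi * κ)) ^ 2 ≤ (9 * Real.pi ^ 2 / 4 * κ ^ 4) * (16 / E ^ 2) := by
    apply mul_le_mul hfrac hcsch (by positivity) (by positivity)
  have hlast : (9 * Real.pi ^ 2 / 4 * κ ^ 4) * (16 / E ^ 2) ≤ 92160 * Real.exp (-κ) := by
    have hEκ : Real.exp κ ≤ E := Real.exp_le_exp.2 (by nlinarith)
    have h5 : 92160 * Real.exp (-κ) = 92160 / Real.exp κ := by
      rw [Real.exp_neg]; ring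
    have heκ : (0:ℝ) < Real.exp κ := Real.exp_pos _
    rw [h5, show (9 * Real.pi ^ 2 / 4 * κ ^ 4) * (16 / E ^ 2)
        = 36 * Real.pi ^ 2 * κ ^ 4 / E ^ 2 from by ring,
      div_le_div_iff₀ (by positivity) (by positivity)]
    have h6 : κ ^ 4 * Real.exp κ ≤ 256 * E * E :=
      mul_le_mul hk4 hEκ heκ.le (by positivity)
    have h7 : (0:ℝ) ≤ κ ^ 4 * Real.exp κ := by positivity
    nlinarith [h6, h7, mul_pos hE0 hE0]
  linarith

lemma Rc_bound {z : ℂ} (hz : 0 ≤ z.re) : ‖Rc z‖ ≤ 92160 / (z.re + 2) := by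
  have hz2 : (0:ℝ) < z.re + 2 := by linarith
  have h1 : ‖Rc z‖ ≤ ∫ κ in Set.Ioi (1 : ℝ),
      ‖(((9 * Real.pi ^ 2 / 16) * κ ^ 4 * (1 + κ ^ 2) ^ 2 /
        ((κ ^ 2 + 9 / 4) * (κ ^ 2 + 1 / 4)) *
        (1 / Real.sinh (Real.pi * κ)) ^ 2 : ℝ) : ℂ) * (z + (κ : ℂ) ^ 2 + 1)⁻¹‖ :=
    norm_integral_le_integral_norm _
  have hgi : IntegrableOn (fun κ : ℝ => (92160 / (z.re + 2)) * Real.exp (-κ))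
      (Set.Ioi (1:ℝ)) := by
    have := exp_neg_integrableOn_Ioi 1 (one_pos)
    simp only [neg_one_mul] at this
    exact this.const_mul _
  have h2 : (∫ κ in Set.Ioi (1 : ℝ),
      ‖(((9 * Real.pi ^ 2 / 16) * κ ^ 4 * (1 + κ ^ 2) ^ 2 /
        ((κ ^ 2 + 9 / 4) * (κ ^ 2 + 1 / 4)) *
        (1 / Real.sinh (Real.pi * κ)) ^ 2 : ℝ) : ℂ) * (z + (κ : ℂ) ^ 2 + 1)⁻¹‖)
      ≤ ∫ κ in Set.Ioi (1:ℝ), (92160 / (z.re + 2)) * Real.exp (-κ) := by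
    apply integral_mono_of_nonneg
    · filter_upwards with κ using norm_nonneg _
    · exact hgi
    · filter_upwards [self_mem_ae_restrict (measurableSet_Ioi)] with κ hκ
      have hκ1 : (1:ℝ) ≤ κ := le_of_lt hκ
      have hW0 : (0:ℝ) ≤ (9 * Real.pi ^ 2 / 16) * κ ^ 4 * (1 + κ ^ 2) ^ 2 /
          ((κ ^ 2 + 9 / 4) * (κ ^ 2 + 1 / 4)) *
          (1 / Real.sinh (Real.pi * κ)) ^ 2 := by positivity
      have hre : z.re + 2 ≤ ‖z + (κ:ℂ)^2 + 1‖ := by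
        have h := Complex.re_le_norm (z + (κ:ℂ)^2 + 1)
        have hre2 : (z + (κ:ℂ)^2 + 1).re = z.re + κ^2 + 1 := by
          simp [Complex.add_re]
          norm_cast
        rw [hre2] at h
        nlinarith
      have hinv : ‖(z + (κ:ℂ)^2 + 1)⁻¹‖ ≤ (z.re + 2)⁻¹ := by
        rw [norm_inv]
        exact inv_anti₀ hz2 hre
      rw [norm_mul, Complex.norm_real, Real.norm_eq_abs, abs_of_nonneg hW0]
      calc _ ≤ (92160 * Real.exp (-κ)) * (z.re + 2)⁻¹ :=
            mul_le_mul (weight_le hκ1) hinv (norm_nonneg _) (by positivity)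
        _ = 92160 / (z.re + 2) * Real.exp (-κ) := by ring
  have h3 : (∫ κ in Set.Ioi (1:ℝ), (92160 / (z.re + 2)) * Real.exp (-κ))
      = (92160 / (z.re + 2)) * Real.exp (-1) := by
    rw [integral_const_mul, integral_exp_neg_Ioi]
  have h4 : Real.exp (-1 : ℝ) ≤ 1 := Real.exp_le_one_iff.2 (by norm_num)
  have h5 : (0:ℝ) ≤ 92160 / (z.re + 2) := by positivity
  calc ‖Rc z‖ ≤ _ := h1
    _ ≤ _ := h2
    _ = (92160 / (z.re + 2)) * Real.exp (-1) := h3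
    _ ≤ 92160 / (z.re + 2) := by nlinarith

lemma Rd_bound {z : ℂ} (hz : 5/4 < z.re) : ‖Rd z‖ ≤ 10 / (z.re - 5/4) := by
  have hπ2 : Real.pi ^ 2 ≤ 10 := by nlinarith [Real.pi_lt_d2, Real.pi_pos]
  have h54 : (0:ℝ) < z.re - 5/4 := by linarith
  have hA : ‖(6075 * (Real.pi:ℂ)^2 / 8192)‖ = 6075 * Real.pi^2 / 8192 := by
    rw [show (6075 * (Real.pi:ℂ)^2 / 8192) = ((6075 * Real.pi^2 / 8192 : ℝ) : ℂ) by
      push_cast; ring, Complex.norm_real, Real.norm_eq_abs, abs_of_nonneg (by positivity)]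
  have hB : ‖(81 * (Real.pi:ℂ)^2 / 8192)‖ = 81 * Real.pi^2 / 8192 := by
    rw [show (81 * (Real.pi:ℂ)^2 / 8192) = ((81 * Real.pi^2 / 8192 : ℝ) : ℂ) by
      push_cast; ring, Complex.norm_real, Real.norm_eq_abs, abs_of_nonneg (by positivity)]
  have hre1 : (z - 5/4).re = z.re - 5/4 := by
    rw [show (5/4 : ℂ) = ((5/4 : ℝ) : ℂ) by norm_num]
    simp [Complex.sub_re]
  have hre2 : (z + 3/4).re = z.re + 3/4 := by
    rw [show (3/4 : ℂ) = ((3/4 : ℝ) : ℂ) by norm_num]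
    simp [Complex.add_re]
  have h1 : ‖(z - 5/4)⁻¹‖ ≤ (z.re - 5/4)⁻¹ := by
    rw [norm_inv]
    apply inv_anti₀ h54
    have h := Complex.re_le_norm (z - 5/4)
    rw [hre1] at h
    linarith
  have h2 : ‖(z + 3/4)⁻¹‖ ≤ (z.re - 5/4)⁻¹ := by
    rw [norm_inv]
    apply inv_anti₀ h54
    have h := Complex.re_le_norm (z + 3/4)
    rw [hre2] at h
    linarith
  have hinv0 : (0:ℝ) ≤ (z.re - 5/4)⁻¹ := by positivity
  calc ‖Rd z‖ ≤ ‖(6075 * (Real.pi:ℂ)^2 / 8192) * (z - 5/4)⁻¹‖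
        + ‖(81 * (Real.pi:ℂ)^2 / 8192) * (z + 3/4)⁻¹‖ := norm_sub_le _ _
    _ = (6075 * Real.pi^2 / 8192) * ‖(z - 5/4)⁻¹‖
        + (81 * Real.pi^2 / 8192) * ‖(z + 3/4)⁻¹‖ := by rw [norm_mul, norm_mul, hA, hB]
    _ ≤ (6075 * Real.pi^2 / 8192) * (z.re - 5/4)⁻¹
        + (81 * Real.pi^2 / 8192) * (z.re - 5/4)⁻¹ := by
          have := mul_le_mul_of_nonneg_left h1 (by positivity : (0:ℝ) ≤ 6075 * Real.pi^2/8192)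
          have := mul_le_mul_of_nonneg_left h2 (by positivity : (0:ℝ) ≤ 81 * Real.pi^2/8192)
          linarith
    _ ≤ 10 / (z.re - 5/4) := by
          rw [div_eq_mul_inv (10:ℝ)]
          nlinarith [mul_le_mul_of_nonneg_right hπ2 hinv0]

/-- If `0 ≤ -α < β`, then there is `ℓ < -5/4` such that every solution
satisfies `Re λ < -ℓ`. -/
theorem stmt3 (α β : ℝ) (hα : 0 ≤ -α) (hαβ : -α < β) :
    ∃ ℓ : ℝ, ℓ < -(5 / 4) ∧ ∀ z : ℂ, IsSolution α β ℓ z → z.re < -ℓ := by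
  have hβ : 0 < α + β := by linarith
  have hq : 0 < 92170 / (α + β) := by positivity
  refine ⟨-(5/4 + 92170/(α+β) + 1), by linarith, ?_⟩
  intro z hsol
  rw [neg_neg]
  by_contra hcon
  push_neg at hcon
  obtain ⟨hdom, hbr, heq⟩ := hsol
  have h54 : (5/4 : ℝ) < z.re := by linarith
  -- real part of the square-root argument
  have hw : 1 ≤ (1 + z + ((-(5/4 + 92170/(α+β) + 1) : ℝ) : ℂ)).re := by
    simp only [Complex.add_re, Complex.one_re, Complex.ofReal_re]
    linarith
  have hs := re_cpow_half hw
  have hβ' : 0 < β := by linarith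
  have hlhs : α + β ≤ (R z).re := by
    rw [← heq]
    simp only [Complex.add_re, Complex.mul_re, Complex.ofReal_re, Complex.ofReal_im,
      zero_mul, sub_zero]
    nlinarith
  have habs : (R z).re ≤ ‖R z‖ := by
    exact Complex.re_le_norm _
  have hRz : ‖R z‖ ≤ 92170 / (z.re - 5/4) := by
    have h1 := Rd_bound h54
    have h2 := Rc_bound (z := z) (by linarith)
    have h3 : 92160 / (z.re + 2) ≤ 92160 / (z.re - 5/4) := by
      apply div_le_div_of_nonneg_left (by norm_num) (by linarith) (by linarith)
    calc ‖R z‖ ≤ ‖Rd z‖ + ‖Rc z‖ := norm_add_le _ _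
      _ ≤ 10 / (z.re - 5/4) + 92160 / (z.re - 5/4) := by linarith
      _ = 92170 / (z.re - 5/4) := by rw [← add_div]; norm_num
  have hmono : 92170 / (z.re - 5/4) ≤ 92170 / (92170/(α+β) + 1) := by
    apply div_le_div_of_nonneg_left (by norm_num) (by positivity)
    linarith
  have hfin : 92170 / (92170/(α+β) + 1) < α + β := by
    rw [div_lt_iff₀ (by positivity)]
    have h : (α+β) * (92170/(α+β) + 1) = 92170 + (α+β) := by
      field_simp
    rw [h]; linarith
  linarith
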